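/- Let A be a symmetric n×n real matrix with nonnegative entries and all row sums d_u = Σ_v A_{uv} positive, let D be the diagonal degree matrix and P = D^{-1}A the transition matrix. Then for every r ≥ 1 and every s with 0 ≤ s ≤ r − 1, one has (Pᵀ)^s · A · P^{r−1−s} = D · P^r; entrywise, Σ_{u,v} A_{uv} (P^s)_{u,a} (P^{r−1−s})_{v,b} = d_a · (P^r)_{a,b} for all vertices a, b. In particular, the distribution of the edge (u', v') returned by the PathSampling procedure—which samples an edge (u,v) with probability proportional to A_{uv}, samples s uniformly from {0, …, r−1}, walks u for s random-walk steps to reach u' and walks v for r−1−s steps to reach v'—is proportional to the (u',v') entry of D · (D^{-1}A)^r and does not depend on s. -/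

import Mathlib

open Matrix

/-- **Correctness of PathSampling.** For a symmetric nonnegative weight matrix `A` with
positive degrees `d_u = ∑_v A_{uv}`, degree matrix `D` and transition matrix `P = D⁻¹A`,
for every `r ≥ 1` and every `0 ≤ s ≤ r - 1` one has `(Pᵀ)ˢ · A · P^{r-1-s} = D · Pʳ`;
entrywise, `∑_{u,v} A_{uv} (Pˢ)_{ua} (P^{r-1-s})_{vb} = d_a (Pʳ)_{ab}` for all `a, b`.
Hence the distribution of the edge `(u',v')` returned by PathSampling (sample an edge
`(u,v)` ∝ `A_{uv}`, a uniform `s ∈ {0,…,r-1}`, walk `u` for `s` steps to `u'` and `v` for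
`r-1-s` steps to `v'`) is proportional to the `(u',v')` entry of `D (D⁻¹A)ʳ` and is
independent of `s`. -/
theorem pathsampling_distribution {n : ℕ}
    (A : Matrix (Fin n) (Fin n) ℝ)
    (hsymm : A.IsSymm) (hnonneg : ∀ i j, 0 ≤ A i j)
    (hdeg : ∀ u : Fin n, 0 < ∑ w, A u w)
    (P : Matrix (Fin n) (Fin n) ℝ)
    (hP : P = fun i j => A i j / ∑ w, A i w)
    (r s : ℕ) (hr : 1 ≤ r) (hs : s ≤ r - 1) :
    Pᵀ ^ s * A * P ^ (r - 1 - s) = Matrix.diagonal (fun u => ∑ w, A u w) * P ^ r ∧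
      ∀ a b : Fin n,
        (∑ u, ∑ v, A u v * (P ^ s) u a * (P ^ (r - 1 - s)) v b)
          = (∑ w, A a w) * (P ^ r) a b := by
  have hd : ∀ u : Fin n, (∑ w, A u w) ≠ 0 := fun u => (hdeg u).ne'
  have hDP : Matrix.diagonal (fun u => ∑ w, A u w) * P = A := by
    ext i j
    rw [diagonal_mul]
    simp [hP, mul_div_cancel₀, hd i]
  have hA : ∀ i j, A i j = A j i := fun i j => congrFun (congrFun hsymm j) i
  have hPA : Pᵀ * A = A * P := by
    ext i j
    simp only [mul_apply, transpose_apply]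
    simp only [hP]
    apply Finset.sum_congr rfl
    intro k _
    rw [hA k i]
    ring
  have hpow : ∀ t : ℕ, Pᵀ ^ t * A = A * P ^ t := by
    intro t
    induction t with
    | zero => simp
    | succ t ih =>
      rw [pow_succ', mul_assoc, ih, ← mul_assoc, hPA, mul_assoc, ← pow_succ']
  have key : Pᵀ ^ s * A * P ^ (r - 1 - s) = Matrix.diagonal (fun u => ∑ w, A u w) * P ^ r := by
    rw [hpow, mul_assoc, ← pow_add]
    have : s + (r - 1 - s) = r - 1 := by omega
    rw [this]
    have h2 : r - 1 + 1 = r := by omega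
    conv_rhs => rw [← h2, pow_succ', ← mul_assoc, hDP]
  refine ⟨key, fun a b => ?_⟩
  have := congrFun (congrFun key a) b
  simp only [mul_apply, transpose_apply, diagonal_apply, ite_mul, zero_mul,
    Finset.sum_ite_eq, Finset.mem_univ, if_true] at this
  rw [← this]
  rw [Finset.sum_comm]
  apply Finset.sum_congr rfl
  intro v _
  rw [Finset.sum_mul]
  apply Finset.sum_congr rfl
  intro u _
  have : (Pᵀ ^ s) a u = (P ^ s) u a := by rw [← transpose_pow]; rfl
  rw [this]; ring
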